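/- For each k ≥ 3, if there is a deterministic NOF protocol for Part_{n,k} of cost c, then c_{n,k} ≥ k^n / 2^c, i.e., the density Hales-Jewett number is at least the number of partitions divided by the number of leaves of the protocol. -/

import Mathlib

def IsPartitionTuple (n k : ℕ) (S : Fin k → Finset (Fin n)) : Prop :=
  (∀ i j, i ≠ j → Disjoint (S i) (S j)) ∧ ∀ x : Fin n, ∃ i, x ∈ S i

/-- The partition function `Part_{n,k}`, as a boolean function. -/
def PartF (n k : ℕ) (S : Fin k → Finset (Fin n)) : Bool :=
  decide ((∀ i j, i ≠ j → Disjoint (S i) (S j)) ∧ ∀ x : Fin n, ∃ i, x ∈ S i)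

def IsCombinatorialLine (n k : ℕ) (L : Set (Fin n → Fin k)) : Prop :=
  ∃ w : Fin n → Option (Fin k), (∃ x, w x = none) ∧
    L = Set.range fun j : Fin k => fun x : Fin n => (w x).getD j

/-- The density Hales-Jewett number `c_{n,k}`. -/
noncomputable def densityHJ (n k : ℕ) : ℕ :=
  sSup {m | ∃ A : Set (Fin n → Fin k),
    (¬ ∃ L, IsCombinatorialLine n k L ∧ L ⊆ A) ∧ Nat.card A = m}

inductive NOFProtocol {k : ℕ} (X : Fin k → Type*) : Type _ where
  | leaf : Bool → NOFProtocol X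
  | node : (i : Fin k) → (msg : (∀ j, X j) → Bool) →
      (∀ x y : ∀ j, X j, (∀ j, j ≠ i → x j = y j) → msg x = msg y) →
      (Bool → NOFProtocol X) → NOFProtocol X

def NOFProtocol.eval {k : ℕ} {X : Fin k → Type*} : NOFProtocol X → (∀ j, X j) → Bool
  | .leaf b, _ => b
  | .node _ msg _ next, x => (next (msg x)).eval x

def NOFProtocol.cost {k : ℕ} {X : Fin k → Type*} : NOFProtocol X → ℕ
  | .leaf _ => 0
  | .node _ _ _ next => 1 + max (next true).cost (next false).cost

def NOFProtocol.Computes {k : ℕ} {X : Fin k → Type*} (p : NOFProtocol X)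
    (f : (∀ j, X j) → Bool) : Prop :=
  ∀ x, p.eval x = f x


namespace NOFAux

variable {k : ℕ} {X : Fin k → Type*}

def transcript : NOFProtocol X → (∀ j, X j) → List Bool
  | .leaf _, _ => []
  | .node _ msg _ next, x => msg x :: transcript (next (msg x)) x

lemma transcript_length_le (p : NOFProtocol X) (x : ∀ j, X j) :
    (transcript p x).length ≤ p.cost := by
  induction p with
  | leaf b => simp [transcript, NOFProtocol.cost]
  | node i msg h next ih =>
    simp only [transcript, NOFProtocol.cost, List.length_cons]
    have h1 := ih (msg x)
    have h2 : (next (msg x)).cost ≤ max (next true).cost (next false).cost := by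
      cases msg x
      · exact le_max_right _ _
      · exact le_max_left _ _
    omega

lemma transcript_prefix (p : NOFProtocol X) (x y : ∀ j, X j) (l : List Bool)
    (h : transcript p x = transcript p y ++ l) : l = [] := by
  induction p generalizing l with
  | leaf b => simpa [transcript] using h
  | node i msg hm next ih =>
    simp only [transcript, List.cons_append, List.cons.injEq] at h
    obtain ⟨h1, h2⟩ := h
    rw [h1] at h2
    exact ih (msg y) l h2

lemma transcript_pad_inj (p : NOFProtocol X) (x y : ∀ j, X j) (c : ℕ)
    (hc : p.cost ≤ c)
    (h : ∀ i : Fin c, (transcript p x).getD i false = (transcript p y).getD i false) :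
    transcript p x = transcript p y := by
  have key : ∀ u v : ∀ j, X j, (transcript p u).length ≤ (transcript p v).length →
      (∀ i : Fin c, (transcript p u).getD i false = (transcript p v).getD i false) →
      transcript p u = transcript p v := by
    intro u v hlen hpad
    have hprefix : transcript p v = transcript p u ++
        (transcript p v).drop (transcript p u).length := by
      have htake : transcript p u = (transcript p v).take (transcript p u).length := by
        apply List.ext_getElem
        · simp [Nat.min_eq_left hlen]
        · intro i h1 h2
          have hiu : i < (transcript p u).length := h1
          have hic : i < c := lt_of_lt_of_le hiu (le_trans (transcript_length_le p u) hc)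
          have := hpad ⟨i, hic⟩
          simp only [List.getD_eq_getElem?_getD] at this
          rw [List.getElem?_eq_getElem hiu,
            List.getElem?_eq_getElem (lt_of_lt_of_le hiu hlen)] at this
          simpa using this
      conv_lhs => rw [← List.take_append_drop (transcript p u).length (transcript p v)]
      rw [← htake]
    have := transcript_prefix p v u _ hprefix
    rw [hprefix, this, List.append_nil]
  rcases le_total (transcript p x).length (transcript p y).length with hle | hle
  · exact key x y hle h
  · exact (key y x hle fun i => (h i).symm).symm

lemma eval_fool (hk0 : 0 < k) (S : Fin k → ∀ j, X j) (T : ∀ j, X j)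
    (hST : ∀ j i, i ≠ j → T i = S j i) :
    ∀ p : NOFProtocol X, (∀ j, transcript p (S j) = transcript p (S ⟨0, hk0⟩)) →
      p.eval T = p.eval (S ⟨0, hk0⟩) := by
  intro p
  induction p with
  | leaf b => intro _; rfl
  | node i msg hm next ih =>
    intro htr
    have hmsg : ∀ j, msg (S j) = msg (S ⟨0, hk0⟩) := by
      intro j
      have := htr j
      simp only [transcript, List.cons.injEq] at this
      exact this.1
    have hT : msg T = msg (S i) := hm T (S i) (fun j hj => hST i j hj)
    have hTb : msg T = msg (S ⟨0, hk0⟩) := by rw [hT, hmsg]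
    simp only [NOFProtocol.eval, hTb]
    refine ih (msg (S ⟨0, hk0⟩)) ?_
    intro j
    have := htr j
    simp only [transcript, hmsg j, List.cons.injEq] at this
    exact this.2

end NOFAux

open NOFAux

/-- The partition tuple associated to a coloring. -/
def toTuple (n k : ℕ) (x : Fin n → Fin k) : Fin k → Finset (Fin n) :=
  fun i => Finset.univ.filter (fun a => x a = i)

lemma partF_toTuple (x : Fin n → Fin k) : PartF n k (toTuple n k x) = true := by
  rw [PartF, decide_eq_true_iff]
  constructor
  · intro i j hij
    rw [Finset.disjoint_left]
    intro a ha hb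
    simp only [toTuple, Finset.mem_filter] at ha hb
    exact hij (ha.2 ▸ hb.2)
  · intro a
    exact ⟨x a, by simp [toTuple]⟩

/-- For `k ≥ 3`: if there is a deterministic NOF protocol for `Part_{n,k}` of cost `c`,
then the density Hales-Jewett number satisfies `c_{n,k} ≥ k^n / 2^c`. -/
theorem densityHJ_lower_of_protocol (n k c : ℕ) (hk : 3 ≤ k)
    (p : NOFProtocol (fun _ : Fin k => Finset (Fin n)))
    (hp : p.Computes (PartF n k)) (hc : p.cost ≤ c) :
    (densityHJ n k : ℝ) ≥ (k : ℝ) ^ n / 2 ^ c := by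
  classical
  have hk0 : 0 < k := by omega
  set F : (Fin n → Fin k) → (Fin c → Bool) :=
    fun x i => (transcript p (toTuple n k x)).getD i false with hF
  -- each fiber of F is line-free
  have fiber_free : ∀ b : Fin c → Bool,
      ¬ ∃ L, IsCombinatorialLine n k L ∧ L ⊆ {x | F x = b} := by
    rintro b ⟨L, ⟨w, ⟨a0, ha0⟩, hL⟩, hLA⟩
    set φ : Fin k → (Fin n → Fin k) := fun j x => (w x).getD j with hφ
    have hmem : ∀ j, F (φ j) = b := by
      intro j
      exact hLA (hL ▸ Set.mem_range_self j)
    set S : Fin k → (Fin k → Finset (Fin n)) := fun j => toTuple n k (φ j) with hS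
    set T : Fin k → Finset (Fin n) :=
      fun i => Finset.univ.filter (fun a => w a = some i) with hT
    have hST : ∀ j i, i ≠ j → T i = S j i := by
      intro j i hij
      ext a
      simp only [hT, hS, toTuple, hφ, Finset.mem_filter, Finset.mem_univ, true_and]
      cases hwa : w a with
      | none => simp [Option.getD, hij.symm]
      | some m => simp
    have htr : ∀ j, transcript p (S j) = transcript p (S ⟨0, hk0⟩) := by
      intro j
      refine transcript_pad_inj p _ _ c hc ?_
      intro i
      have h1 := congrFun (hmem j) i
      have h2 := congrFun (hmem ⟨0, hk0⟩) i
      simp only [hF] at h1 h2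
      rw [h1, h2]
    have heval := eval_fool hk0 S T hST p htr
    have hone : p.eval (S ⟨0, hk0⟩) = true := by
      rw [hp]; exact partF_toTuple _
    have hzero : p.eval T = false := by
      rw [hp, PartF, decide_eq_false_iff_not]
      rintro ⟨-, hcov⟩
      obtain ⟨i, hi⟩ := hcov a0
      simp only [hT, Finset.mem_filter, ha0] at hi
      exact Option.some_ne_none i hi.2.symm
    rw [hone, hzero] at heval
    exact Bool.noConfusion heval
  -- fiber cardinalities
  set G : (Fin c → Bool) → Finset (Fin n → Fin k) :=
    fun b => Finset.univ.filter (fun x => F x = b) with hG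
  have hsum : ∑ b : Fin c → Bool, (G b).card = k ^ n := by
    rw [← Finset.card_eq_sum_card_fiberwise (f := F) (t := Finset.univ)
      (fun x _ => Finset.mem_univ _)]
    simp
  have hBdd : BddAbove {m | ∃ A : Set (Fin n → Fin k),
      (¬ ∃ L, IsCombinatorialLine n k L ∧ L ⊆ A) ∧ Nat.card A = m} := by
    refine ⟨k ^ n, ?_⟩
    rintro m ⟨A, -, rfl⟩
    have : Nat.card A ≤ Nat.card (Fin n → Fin k) :=
      Nat.card_le_card_of_injective _ Subtype.val_injective
    simpa [Nat.card_eq_fintype_card] using this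
  have hfiber_le : ∀ b : Fin c → Bool, (G b).card ≤ densityHJ n k := by
    intro b
    refine le_csSup hBdd ?_
    refine ⟨{x | F x = b}, fiber_free b, ?_⟩
    have hset : ({x | F x = b} : Set (Fin n → Fin k)) = ↑(G b) := by
      ext x; simp [hG]
    rw [hset, Nat.card_coe_set_eq, Set.ncard_coe_finset]
  have hmain : k ^ n ≤ 2 ^ c * densityHJ n k := by
    calc k ^ n = ∑ b : Fin c → Bool, (G b).card := hsum.symm
      _ ≤ ∑ _b : Fin c → Bool, densityHJ n k :=
          Finset.sum_le_sum fun b _ => hfiber_le b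
      _ = 2 ^ c * densityHJ n k := by
          simp [Finset.sum_const, Finset.card_univ, mul_comm]
  rw [ge_iff_le, div_le_iff₀ (by positivity)]
  have := hmain
  calc (k : ℝ) ^ n ≤ ((2 ^ c * densityHJ n k : ℕ) : ℝ) := by exact_mod_cast hmain
    _ = densityHJ n k * 2 ^ c := by push_cast; ring
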